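/- Fix an integer j₀ ≥ 2, let C = { Σ_{i∈F} ε_i e_i : F ⊂ ℕ finite, card F ≤ n_{j₀−1}, ε_i ∈ {−1,1} }, and let D' be the smallest subset of c₀₀ containing C and closed under the operations: for every j ≥ 1 and every f_1 < f_2 < ⋯ < f_d in D' with d ≤ 5·n_j, the element (1/m_j)(f_1 + ⋯ + f_d) belongs to D'. Then for every h ∈ D', the set { k ∈ ℕ : |h(k)| > 1/m_{j₀} } has cardinality strictly less than (5·n_{j₀−1})^{log₂ m_{j₀}} (note log₂ m_{j₀} = 5^{j₀−1}). -/

import Mathlib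

noncomputable section

/-- The sequence `m_j`: `m 1 = 2`, `m (j+1) = (m j)^5`, i.e. `m j = 2 ^ 5 ^ (j-1)`. -/
def mseq (j : ℕ) : ℕ := 2 ^ 5 ^ (j - 1)

/-- The sequence `n_j`: `n 1 = 4` and `n (j+1) = (5 n_j) ^ (3 · 5^j)`. -/
def nseq : ℕ → ℕ
  | 0 => 1
  | 1 => 4
  | (j + 2) => (5 * nseq (j + 1)) ^ (3 * 5 ^ (j + 1))

/-- `f < g` for finitely supported functions: every element of the support of `f` is
less than every element of the support of `g`. -/
def BlockLt (f g : ℕ →₀ ℝ) : Prop :=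
  ∀ a ∈ f.support, ∀ b ∈ g.support, a < b

/-- The action of `f ∈ c₀₀` on `x ∈ c₀₀`: `f(x) = ∑ k, f k * x k`. -/
def fapply (f x : ℕ →₀ ℝ) : ℝ := x.sum fun i v => f i * v

/-- The smallest subset `D'` of `c₀₀` containing the set
`C = {∑_{i ∈ F} ±e_i : card F ≤ n_{j₀-1}}` and closed under the
`(𝓐_{5 n_j}, 1/m_j)` operations for all `j ≥ 1`. -/
inductive Dset (j₀ : ℕ) : (ℕ →₀ ℝ) → Prop
  | base (h : ℕ →₀ ℝ) (hcard : h.support.card ≤ nseq (j₀ - 1))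
      (hval : ∀ k ∈ h.support, h k = 1 ∨ h k = -1) : Dset j₀ h
  | op (j d : ℕ) (hj : 1 ≤ j) (hd : d ≤ 5 * nseq j) (f : Fin d → (ℕ →₀ ℝ))
      (hmem : ∀ i, Dset j₀ (f i))
      (hblock : ∀ i i' : Fin d, i < i' → BlockLt (f i) (f i')) :
      Dset j₀ ((mseq j : ℝ)⁻¹ • ∑ i, f i)

lemma nseq_pos : ∀ j, 1 ≤ nseq j
  | 0 => le_refl 1
  | 1 => by norm_num [nseq]
  | (j + 2) => by
      rw [nseq]
      exact Nat.one_le_pow _ _ (by have := nseq_pos (j + 1); positivity)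

lemma nseq_mono : Monotone nseq := by
  apply monotone_nat_of_le_succ
  intro j
  match j with
  | 0 => norm_num [nseq]
  | (j + 1) =>
    show nseq (j + 1) ≤ (5 * nseq (j + 1)) ^ (3 * 5 ^ (j + 1))
    calc nseq (j + 1) ≤ 5 * nseq (j + 1) := by nlinarith [nseq_pos (j + 1)]
    _ ≤ (5 * nseq (j + 1)) ^ (3 * 5 ^ (j + 1)) :=
        Nat.le_self_pow (by positivity) _

/-- If the `f i` are successive blocks, then at each coordinate at most one of them is
nonzero, so the sum at `k` is either `0` or a single term. -/
lemma sum_apply_cases {d : ℕ} (f : Fin d → (ℕ →₀ ℝ))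
    (hblock : ∀ i i' : Fin d, i < i' → BlockLt (f i) (f i')) (k : ℕ) :
    (∑ i, f i) k = 0 ∨ ∃ i0, (∑ i, f i) k = f i0 k := by
  rw [Finsupp.finset_sum_apply]
  by_cases hz : ∀ i, f i k = 0
  · left; simp [hz]
  · push_neg at hz
    obtain ⟨i0, hi0⟩ := hz
    right
    refine ⟨i0, Finset.sum_eq_single i0 (fun i _ hne => ?_) (by simp)⟩
    by_contra h'
    have hk : k ∈ (f i).support := Finsupp.mem_support_iff.2 h'
    have hk0 : k ∈ (f i0).support := Finsupp.mem_support_iff.2 hi0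
    rcases lt_or_gt_of_ne hne with hlt | hgt
    · exact absurd (hblock i i0 hlt k hk k hk0) (lt_irrefl k)
    · exact absurd (hblock i0 i hgt k hk0 k hk) (lt_irrefl k)

lemma mseq_cast (j : ℕ) : (mseq j : ℝ) = (2 : ℝ) ^ (5 ^ (j - 1)) := by
  rw [mseq]; push_cast; ring

lemma mseq_pos (j : ℕ) : (0 : ℝ) < (mseq j : ℝ) := by
  rw [mseq_cast]; positivity

lemma one_le_mseq (j : ℕ) : (1 : ℝ) ≤ (mseq j : ℝ) := by
  rw [mseq_cast]; exact one_le_pow₀ (by norm_num)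

/-- Every element of `D'` is bounded by `1` in sup norm. -/
lemma Dset_abs_le_one {j₀ : ℕ} {h : ℕ →₀ ℝ} (hh : Dset j₀ h) : ∀ k, |h k| ≤ 1 := by
  induction hh with
  | base h hcard hval =>
    intro k
    by_cases hk : k ∈ h.support
    · rcases hval k hk with hv | hv <;> rw [hv] <;> norm_num
    · rw [Finsupp.notMem_support_iff.1 hk]; norm_num
  | op j d hj hd f hmem hblock ih =>
    intro k
    rw [Finsupp.smul_apply, smul_eq_mul, abs_mul, abs_inv,
      abs_of_pos (mseq_pos j)]
    rcases sum_apply_cases f hblock k with hs | ⟨i0, hs⟩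
    · rw [hs]; simp
    · rw [hs]
      calc (mseq j : ℝ)⁻¹ * |f i0 k| ≤ (mseq j : ℝ)⁻¹ * 1 := by
            have := ih i0 k
            have h1 : (0:ℝ) < (mseq j : ℝ)⁻¹ := inv_pos.2 (mseq_pos j)
            nlinarith
      _ ≤ 1 := by
            rw [mul_one]
            exact inv_le_one_of_one_le₀ (one_le_mseq j)

/-- The key inductive counting bound. -/
lemma key_bound {j₀ : ℕ} (hj₀ : 2 ≤ j₀) {h : ℕ →₀ ℝ} (hh : Dset j₀ h) :
    ∀ E : ℕ, 1 ≤ E → E ≤ 5 ^ (j₀ - 1) →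
    (h.support.filter fun k => (2 : ℝ) ^ (-(E : ℤ)) < |h k|).card
      ≤ nseq (j₀ - 1) * (5 * nseq (j₀ - 1)) ^ (E - 1) := by
  induction hh with
  | base h hcard hval =>
    intro E hE1 hE2
    calc (h.support.filter fun k => (2 : ℝ) ^ (-(E : ℤ)) < |h k|).card
        ≤ h.support.card := Finset.card_filter_le _ _
      _ ≤ nseq (j₀ - 1) := hcard
      _ ≤ nseq (j₀ - 1) * (5 * nseq (j₀ - 1)) ^ (E - 1) :=
          Nat.le_mul_of_pos_right _ (by have := nseq_pos (j₀ - 1); positivity)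
  | op j d hj hd f hmem hblock ih =>
    intro E hE1 hE2
    set g : ℕ →₀ ℝ := (mseq j : ℝ)⁻¹ • ∑ i, f i with hg
    by_cases hcase : E ≤ 5 ^ (j - 1)
    · -- the set is empty
      have : (g.support.filter fun k => (2 : ℝ) ^ (-(E : ℤ)) < |g k|) = ∅ := by
        rw [Finset.filter_eq_empty_iff]
        intro k _
        rw [not_lt]
        have hb : |g k| ≤ (2 : ℝ) ^ (-((5 ^ (j - 1) : ℕ) : ℤ)) := by
          rw [hg, Finsupp.smul_apply, smul_eq_mul, abs_mul, abs_inv,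
            abs_of_pos (mseq_pos j)]
          have hle1 : |(∑ i, f i) k| ≤ 1 := by
            rcases sum_apply_cases f hblock k with hs | ⟨i0, hs⟩
            · rw [hs]; norm_num
            · rw [hs]; exact Dset_abs_le_one (hmem i0) k
          have hinv : (mseq j : ℝ)⁻¹ = (2 : ℝ) ^ (-((5 ^ (j - 1) : ℕ) : ℤ)) := by
            rw [mseq_cast, ← zpow_natCast, ← zpow_neg]
          rw [hinv]
          have hp : (0:ℝ) < (2 : ℝ) ^ (-((5 ^ (j - 1) : ℕ) : ℤ)) := by positivity
          nlinarith [abs_nonneg ((∑ i, f i) k)]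
        refine hb.trans ?_
        apply zpow_le_zpow_right₀ (by norm_num)
        omega
      rw [this]
      simp
    · push_neg at hcase
      obtain ⟨E', hEeq⟩ : ∃ E', E = E' + 5 ^ (j - 1) :=
        ⟨E - 5 ^ (j - 1), by omega⟩
      have h5pos : 1 ≤ 5 ^ (j - 1) := Nat.one_le_pow _ _ (by norm_num)
      have hE'1 : 1 ≤ E' := by omega
      have hE'2 : E' ≤ 5 ^ (j₀ - 1) := by omega
      have hjle : j ≤ j₀ - 1 := by
        by_contra hjc
        push_neg at hjc
        have : 5 ^ (j₀ - 1) ≤ 5 ^ (j - 1) :=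
          Nat.pow_le_pow_right (by norm_num) (by omega)
        omega
      -- subset of union of children filters
      have hsub : (g.support.filter fun k => (2 : ℝ) ^ (-(E : ℤ)) < |g k|) ⊆
          Finset.univ.biUnion (fun i : Fin d =>
            (f i).support.filter fun k => (2 : ℝ) ^ (-(E' : ℤ)) < |f i k|) := by
        intro k hk
        rw [Finset.mem_filter] at hk
        obtain ⟨-, hkv⟩ := hk
        rcases sum_apply_cases f hblock k with hs | ⟨i0, hs⟩
        · exfalso
          have : g k = 0 := by rw [hg, Finsupp.smul_apply, hs, smul_zero]
          rw [this, abs_zero] at hkv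
          have : (0:ℝ) < (2 : ℝ) ^ (-(E : ℤ)) := by positivity
          linarith
        · have hgk : |g k| = (mseq j : ℝ)⁻¹ * |f i0 k| := by
            rw [hg, Finsupp.smul_apply, hs, smul_eq_mul, abs_mul, abs_inv,
              abs_of_pos (mseq_pos j)]
          have hbig : (2 : ℝ) ^ (-(E' : ℤ)) < |f i0 k| := by
            have hmp := mseq_pos j
            have hkv' : (2 : ℝ) ^ (-(E : ℤ)) < |f i0 k| / (mseq j : ℝ) := by
              rw [div_eq_inv_mul]; rw [hgk] at hkv; exact hkv
            have hmul : (mseq j : ℝ) * (2 : ℝ) ^ (-(E : ℤ)) < |f i0 k| :=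
              (lt_div_iff₀' hmp).1 hkv'
            have heq : (mseq j : ℝ) * (2 : ℝ) ^ (-(E : ℤ)) = (2 : ℝ) ^ (-(E' : ℤ)) := by
              rw [mseq_cast, ← zpow_natCast, ← zpow_add₀ (by norm_num : (2:ℝ) ≠ 0)]
              congr 1
              have : (E : ℤ) = (E' : ℤ) + ((5 ^ (j - 1) : ℕ) : ℤ) := by
                exact_mod_cast congrArg (Nat.cast : ℕ → ℤ) hEeq
              omega
            linarith [heq ▸ hmul]
          refine Finset.mem_biUnion.2 ⟨i0, Finset.mem_univ _, Finset.mem_filter.2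
            ⟨Finsupp.mem_support_iff.2 ?_, hbig⟩⟩
          intro hzero
          rw [hzero, abs_zero] at hbig
          have : (0:ℝ) < (2 : ℝ) ^ (-(E' : ℤ)) := by positivity
          linarith
      calc (g.support.filter fun k => (2 : ℝ) ^ (-(E : ℤ)) < |g k|).card
          ≤ (Finset.univ.biUnion (fun i : Fin d =>
              (f i).support.filter fun k => (2 : ℝ) ^ (-(E' : ℤ)) < |f i k|)).card :=
            Finset.card_le_card hsub
        _ ≤ ∑ i : Fin d, ((f i).support.filter fun k =>
              (2 : ℝ) ^ (-(E' : ℤ)) < |f i k|).card := Finset.card_biUnion_le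
        _ ≤ ∑ _i : Fin d, nseq (j₀ - 1) * (5 * nseq (j₀ - 1)) ^ (E' - 1) :=
            Finset.sum_le_sum (fun i _ => ih i E' hE'1 hE'2)
        _ = d * (nseq (j₀ - 1) * (5 * nseq (j₀ - 1)) ^ (E' - 1)) := by
            rw [Finset.sum_const, Finset.card_univ, Fintype.card_fin, smul_eq_mul]
        _ ≤ (5 * nseq (j₀ - 1)) * (nseq (j₀ - 1) * (5 * nseq (j₀ - 1)) ^ (E' - 1)) := by
            have : d ≤ 5 * nseq (j₀ - 1) :=
              hd.trans (Nat.mul_le_mul_left 5 (nseq_mono hjle))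
            exact Nat.mul_le_mul_right _ this
        _ = nseq (j₀ - 1) * (5 * nseq (j₀ - 1)) ^ (E' - 1 + 1) := by ring
        _ ≤ nseq (j₀ - 1) * (5 * nseq (j₀ - 1)) ^ (E - 1) := by
            apply Nat.mul_le_mul_left
            apply Nat.pow_le_pow_right (by have := nseq_pos (j₀ - 1); omega)
            have h51 : 1 ≤ 5 ^ (j - 1) := Nat.one_le_pow _ _ (by norm_num)
            omega


/-- For every `h ∈ D'`, the set `{k : |h(k)| > 1/m_{j₀}}` has
cardinality strictly less than `(5 n_{j₀-1}) ^ (log₂ m_{j₀})`, where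
`log₂ m_{j₀} = 5 ^ (j₀ - 1)`. -/
theorem statement14 (j₀ : ℕ) (hj₀ : 2 ≤ j₀) (h : ℕ →₀ ℝ) (hh : Dset j₀ h) :
    ({k : ℕ | (1 : ℝ) / (mseq j₀ : ℝ) < |h k|}).Finite ∧
    ({k : ℕ | (1 : ℝ) / (mseq j₀ : ℝ) < |h k|}).ncard
      < (5 * nseq (j₀ - 1)) ^ 5 ^ (j₀ - 1) := by
  set E : ℕ := 5 ^ (j₀ - 1) with hE
  have hE1 : 1 ≤ E := Nat.one_le_pow _ _ (by norm_num)
  have hthresh : (1 : ℝ) / (mseq j₀ : ℝ) = (2 : ℝ) ^ (-(E : ℤ)) := by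
    rw [one_div, mseq_cast, ← zpow_natCast, ← zpow_neg, hE]
  have hset : {k : ℕ | (1 : ℝ) / (mseq j₀ : ℝ) < |h k|} =
      ↑(h.support.filter fun k => (2 : ℝ) ^ (-(E : ℤ)) < |h k|) := by
    ext k
    simp only [Set.mem_setOf_eq, Finset.coe_filter, Set.mem_setOf_eq,
      Finsupp.mem_support_iff, hthresh]
    constructor
    · intro hk
      refine ⟨fun hz => ?_, hk⟩
      rw [hz, abs_zero] at hk
      have : (0:ℝ) < (2 : ℝ) ^ (-(E : ℤ)) := by positivity
      linarith
    · exact fun hk => hk.2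
  rw [hset]
  refine ⟨Finset.finite_toSet _, ?_⟩
  rw [Set.ncard_coe_finset]
  have hb := key_bound hj₀ hh E hE1 (le_refl E)
  have hnp := nseq_pos (j₀ - 1)
  calc (h.support.filter fun k => (2 : ℝ) ^ (-(E : ℤ)) < |h k|).card
      ≤ nseq (j₀ - 1) * (5 * nseq (j₀ - 1)) ^ (E - 1) := hb
    _ < (5 * nseq (j₀ - 1)) * (5 * nseq (j₀ - 1)) ^ (E - 1) :=
        Nat.mul_lt_mul_of_lt_of_le (by omega)
          (le_refl _) (Nat.pow_pos (by omega))
    _ = (5 * nseq (j₀ - 1)) ^ (E - 1 + 1) := by ring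
    _ = (5 * nseq (j₀ - 1)) ^ E := by congr 1; omega
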